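/- Under the sink structure hypotheses with s ≥ 2 and with the restriction of W to R × R symmetric, let h ∈ ℝ^n be the k-th column of H, i.e., the unique vector with (Lh)_i = 0 for i ∈ R, h_i = 1 for i ∈ S_k and h_i = 0 for i ∈ S_{−k}. Then h minimizes the energy dissipation with respect to the symmetrized weights: for every y ∈ ℝ^n with y_i = 1 for all i ∈ S_k and y_i = 0 for all i ∈ S_{−k}, one has (1/2)∑_{i,j} Ŵ_{ij}(h_i − h_j)^2 ≤ (1/2)∑_{i,j} Ŵ_{ij}(y_i − y_j)^2. -/

import Mathlib

open Matrix

/-- With `W` symmetric on `R × R`, the `k`-th column of `H` minimizes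
the energy dissipation `(1/2)∑_{i,j} Ŵ_{ij}(y_i − y_j)²` among all `y` with `y = 1`
on `S_k` and `y = 0` on `S_{−k}`. -/
theorem stmt_11 {n s : ℕ} (hn : 1 ≤ n) (hs : 2 ≤ s)
    (W : Matrix (Fin n) (Fin n) ℝ)
    (hWnn : ∀ i j, 0 ≤ W i j)
    (hrow : ∀ i, 0 < ∑ j, W i j)
    (S : Fin s → Finset (Fin n))
    (hSne : ∀ k, (S k).Nonempty)
    (hSdisj : ∀ k l, k ≠ l → Disjoint (S k) (S l))
    (Sall : Finset (Fin n))
    (hSall : ∀ i, i ∈ Sall ↔ ∃ k, i ∈ S k)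
    (hRne : ∃ i, i ∉ Sall)
    (hsink : ∀ k, ∀ i ∈ S k, ∀ j, j ∉ S k → W i j = 0)
    (hSirr : ∀ k, ∀ i ∈ S k, ∀ j ∈ S k, i ≠ j →
      Relation.TransGen (fun a b => a ∈ S k ∧ b ∈ S k ∧ 0 < W a b) i j)
    (hreach : ∀ i, i ∉ Sall →
      ∃ j ∈ Sall, Relation.TransGen (fun a b => 0 < W a b) i j)
    (hRsym : ∀ i j, i ∉ Sall → j ∉ Sall → W i j = W j i)
    (L : Matrix (Fin n) (Fin n) ℝ)
    (hL : L = Matrix.diagonal (fun i => ∑ j, W i j) - W)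
    -- Ŵ : the symmetrized weight matrix
    (What : Matrix (Fin n) (Fin n) ℝ)
    (hWhatR : ∀ i j, i ∉ Sall → What i j = W i j)
    (hWhatS : ∀ i ∈ Sall, ∀ j, j ∉ Sall → What i j = W j i)
    (hWhatSS : ∀ i ∈ Sall, ∀ j ∈ Sall, What i j = 0)
    -- H : the unique nonneg matrix with H𝟙 = 𝟙, LH = 0 and the boundary values
    (H : Matrix (Fin n) (Fin s) ℝ)
    (hHnn : ∀ i k, 0 ≤ H i k)
    (hHrow : ∀ i, ∑ k, H i k = 1)
    (hLH : L * H = 0)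
    (hHone : ∀ k, ∀ i ∈ S k, H i k = 1)
    (hHzero : ∀ k l, l ≠ k → ∀ i ∈ S l, H i k = 0)
    (k : Fin s)
    (y : Fin n → ℝ)
    (hy1 : ∀ i ∈ S k, y i = 1)
    (hy0 : ∀ l, l ≠ k → ∀ i ∈ S l, y i = 0) :
    (1 / 2) * ∑ i, ∑ j, What i j * (H i k - H j k) ^ 2 ≤
      (1 / 2) * ∑ i, ∑ j, What i j * (y i - y j) ^ 2 := by
  classical
  set h : Fin n → ℝ := fun i => H i k with hh
  set g : Fin n → ℝ := fun i => y i - h i with hg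
  -- g vanishes on Sall
  have hg0 : ∀ i ∈ Sall, g i = 0 := by
    intro i hi
    rcases (hSall i).1 hi with ⟨l, hl⟩
    by_cases hlk : l = k
    · subst hlk
      simp [hg, hh, hy1 i hl, hHone l i hl]
    · simp [hg, hh, hy0 l hlk i hl, hHzero k l hlk i hl]
  -- symmetry of What
  have hWsym : ∀ i j, What i j = What j i := by
    intro i j
    by_cases hi : i ∈ Sall <;> by_cases hj : j ∈ Sall
    · rw [hWhatSS i hi j hj, hWhatSS j hj i hi]
    · rw [hWhatS i hi j hj, hWhatR j i hj]
    · rw [hWhatR i j hi, hWhatS j hj i hi]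
    · rw [hWhatR i j hi, hWhatR j i hj, hRsym i j hi hj]
  -- nonnegativity of What
  have hWhnn : ∀ i j, 0 ≤ What i j := by
    intro i j
    by_cases hi : i ∈ Sall <;> by_cases hj : j ∈ Sall
    · rw [hWhatSS i hi j hj]
    · rw [hWhatS i hi j hj]; exact hWnn j i
    · rw [hWhatR i j hi]; exact hWnn i j
    · rw [hWhatR i j hi]; exact hWnn i j
  -- harmonicity: for each i, ∑ j, W i j * (h i - h j) = 0
  have hharm : ∀ i, ∑ j, W i j * (h i - h j) = 0 := by
    intro i
    have h0 : (L * H) i k = 0 := by rw [hLH]; rfl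
    rw [Matrix.mul_apply, hL] at h0
    have hd : ∑ j, (Matrix.diagonal (fun i => ∑ j, W i j) - W) i j * H j k
        = ∑ j, ((if i = j then (∑ j', W i j') else 0) - W i j) * H j k := by
      apply Finset.sum_congr rfl
      intro j _
      simp [Matrix.diagonal_apply, Matrix.sub_apply]
    rw [hd] at h0
    simp only [sub_mul, ite_mul, zero_mul, Finset.sum_sub_distrib,
      Finset.sum_ite_eq, Finset.mem_univ, if_true] at h0
    have e2 : ∑ j, W i j * (h i - h j)
        = (∑ j', W i j') * H i k - ∑ j, W i j * H j k := by
      calc ∑ j, W i j * (h i - h j)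
          = ∑ j, (W i j * H i k - W i j * H j k) := by
            apply Finset.sum_congr rfl; intro j _; simp [hh]; ring
        _ = (∑ j, W i j * H i k) - ∑ j, W i j * H j k := Finset.sum_sub_distrib _ _
        _ = (∑ j', W i j') * H i k - ∑ j, W i j * H j k := by rw [Finset.sum_mul]
    rw [e2, h0]
  -- harmonicity for What rows with i ∉ Sall
  have hharm' : ∀ i, i ∉ Sall → ∑ j, What i j * (h i - h j) = 0 := by
    intro i hi
    have : ∑ j, What i j * (h i - h j) = ∑ j, W i j * (h i - h j) := by
      apply Finset.sum_congr rfl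
      intro j _
      rw [hWhatR i j hi]
    rw [this, hharm i]
  -- cross term is zero
  have hA : ∑ i, ∑ j, What i j * (h i - h j) * g i = 0 := by
    apply Finset.sum_eq_zero
    intro i _
    by_cases hi : i ∈ Sall
    · simp [hg0 i hi]
    · have : ∑ j, What i j * (h i - h j) * g i
          = (∑ j, What i j * (h i - h j)) * g i := by
        rw [Finset.sum_mul]
      rw [this, hharm' i hi, zero_mul]
  have hB : ∑ i, ∑ j, What i j * (h i - h j) * g j = 0 := by
    rw [Finset.sum_comm]
    apply Finset.sum_eq_zero
    intro j _
    by_cases hj : j ∈ Sall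
    · simp [hg0 j hj]
    · have e1 : ∑ i, What i j * (h i - h j) * g j
          = -((∑ i, What j i * (h j - h i)) * g j) := by
        rw [Finset.sum_mul, ← Finset.sum_neg_distrib]
        apply Finset.sum_congr rfl
        intro i _
        rw [hWsym i j]; ring
      rw [e1, hharm' j hj, zero_mul, neg_zero]
  have hcross : ∑ i, ∑ j, What i j * (h i - h j) * (g i - g j) = 0 := by
    have : ∀ i, ∑ j, What i j * (h i - h j) * (g i - g j)
        = ∑ j, (What i j * (h i - h j) * g i - What i j * (h i - h j) * g j) := by
      intro i; apply Finset.sum_congr rfl; intro j _; ring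
    calc ∑ i, ∑ j, What i j * (h i - h j) * (g i - g j)
        = ∑ i, ∑ j, (What i j * (h i - h j) * g i - What i j * (h i - h j) * g j) := by
          exact Finset.sum_congr rfl fun i _ => this i
      _ = (∑ i, ∑ j, What i j * (h i - h j) * g i)
          - ∑ i, ∑ j, What i j * (h i - h j) * g j := by
          rw [← Finset.sum_sub_distrib]
          exact Finset.sum_congr rfl fun i _ => Finset.sum_sub_distrib _ _
      _ = 0 := by rw [hA, hB, sub_zero]
  -- energy of g is nonnegative
  have hgE : 0 ≤ ∑ i, ∑ j, What i j * (g i - g j) ^ 2 := by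
    apply Finset.sum_nonneg
    intro i _
    apply Finset.sum_nonneg
    intro j _
    exact mul_nonneg (hWhnn i j) (sq_nonneg _)
  -- decomposition
  have hdecomp : ∑ i, ∑ j, What i j * (y i - y j) ^ 2
      = (∑ i, ∑ j, What i j * (h i - h j) ^ 2)
        + (∑ i, ∑ j, What i j * (g i - g j) ^ 2)
        + 2 * ∑ i, ∑ j, What i j * (h i - h j) * (g i - g j) := by
    have hy : ∀ i, y i = h i + g i := by intro i; simp [hg]
    calc ∑ i, ∑ j, What i j * (y i - y j) ^ 2
        = ∑ i, ∑ j, (What i j * (h i - h j) ^ 2 + What i j * (g i - g j) ^ 2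
            + 2 * (What i j * (h i - h j) * (g i - g j))) := by
          apply Finset.sum_congr rfl; intro i _
          apply Finset.sum_congr rfl; intro j _
          rw [hy i, hy j]; ring
      _ = _ := by
          rw [Finset.mul_sum]
          simp only [Finset.sum_add_distrib, Finset.mul_sum]
    -- done
  rw [hdecomp, hcross]
  nlinarith [hgE]
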